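/- Let G be a group possessing a finite non-normal subgroup, and suppose the intersection R(G) of all finite non-normal subgroups of G is nontrivial. Then R(G) is a cyclic p-group for some prime p. -/

import Mathlib

open Subgroup

/-- If a group `G` has a finite non-normal subgroup and the intersection `R(G)`
of all finite non-normal subgroups of `G` is nontrivial, then `R(G)` is a
cyclic `p`-group for some prime `p`. -/
theorem stmt_8 (G : Type*) [Group G]
    (S : Set (Subgroup G)) (hS : S = {H : Subgroup G | (H : Set G).Finite ∧ ¬ H.Normal})
    (hne : S.Nonempty) (hR : sInf S ≠ ⊥) :
    ∃ p : ℕ, p.Prime ∧ ((sInf S : Subgroup G) : Set G).Finite ∧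
      IsCyclic (sInf S : Subgroup G) ∧ IsPGroup p (sInf S : Subgroup G) := by
  classical
  -- pick H in S of minimal cardinality
  obtain ⟨H₀, hH₀⟩ := hne
  have hTne : {n : ℕ | ∃ H ∈ S, Nat.card H = n}.Nonempty := ⟨_, H₀, hH₀, rfl⟩
  obtain ⟨H, hHS, hHcard⟩ := Nat.sInf_mem hTne
  have hmin : ∀ K ∈ S, Nat.card H ≤ Nat.card K := by
    intro K hK
    rw [hHcard]
    exact Nat.sInf_le ⟨K, hK, rfl⟩
  have hHS' := hHS
  rw [hS] at hHS'
  obtain ⟨hHfin, hHnn⟩ := hHS'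
  -- any finite subgroup of smaller cardinality is normal
  have key : ∀ K : Subgroup G, (K : Set G).Finite → Nat.card K < Nat.card H → K.Normal := by
    intro K hKfin hlt
    by_contra hn
    exact absurd (hmin K (by rw [hS]; exact ⟨hKfin, hn⟩)) (by omega)
  -- cardinality of proper subgroups
  have cardlt' : ∀ K : Subgroup G, K ≤ H → K ≠ H → Nat.card K < Nat.card H := by
    intro K hle hneK
    have hss : (K : Set G) ⊂ (H : Set G) := by
      refine ⟨hle, fun hsub => hneK (le_antisymm hle ?_)⟩
      intro x hx
      exact hsub hx
    have := Set.ncard_lt_ncard hss hHfin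
    rw [← Nat.card_coe_set_eq, ← Nat.card_coe_set_eq] at this; exact this
  have hzfin : ∀ a : G, a ∈ H → ((zpowers a : Subgroup G) : Set G).Finite := by
    intro a ha
    exact hHfin.subset (fun x hx => zpowers_le.mpr ha hx)
  -- H is cyclic, generated by some h
  obtain ⟨h, hhH, hgen⟩ : ∃ h ∈ H, zpowers h = H := by
    by_contra hc
    push_neg at hc
    refine hHnn ⟨fun x hx g => ?_⟩
    have hnorm : (zpowers x).Normal :=
      key _ (hzfin x hx) (cardlt' _ (zpowers_le.mpr hx) (hc x hx))
    exact zpowers_le.mpr hx (hnorm.conj_mem x (mem_zpowers x) g)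
  -- order of h
  have hHne : (H : Set G).Nonempty := ⟨1, H.one_mem⟩
  have hcardH : Nat.card H = orderOf h := by rw [← hgen, Nat.card_zpowers]
  have hnpos : 0 < orderOf h := by
    haveI := hHfin.to_subtype
    haveI : Nonempty H := ⟨⟨1, H.one_mem⟩⟩
    have : 0 < Nat.card H := Nat.card_pos
    omega
  set n := orderOf h with hn
  have hn1 : n ≠ 1 := by
    intro h1
    have : h = 1 := orderOf_eq_one_iff.mp h1
    apply hHnn
    rw [← hgen, this, zpowers_one_eq_bot]
    infer_instance
  set p := n.minFac with hpdef
  have hp : p.Prime := Nat.minFac_prime hn1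
  -- n is a power of p
  set m := p ^ n.factorization p with hmdef
  set k := n / m with hkdef
  have hmk : m * k = n := Nat.ordProj_mul_ordCompl_eq_self n p
  have hmdvd : m ∣ n := Nat.ordProj_dvd n p
  have hkdvd : k ∣ n := Nat.ordCompl_dvd n p
  have hcop : Nat.Coprime m k :=
    Nat.Coprime.pow_left _ (Nat.coprime_ordCompl hp (by omega))
  have hpm : p ∣ m := by
    refine dvd_pow_self p ?_
    have : p ∣ n := Nat.minFac_dvd n
    have := (Nat.Prime.dvd_iff_one_le_factorization hp (by omega)).mp this
    omega
  have hm1 : 1 < m := lt_of_lt_of_le hp.one_lt (Nat.le_of_dvd (pow_pos hp.pos _) hpm)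
  have hk1 : k = 1 := by
    by_contra hk1
    have hkpos : 0 < k := Nat.pos_of_dvd_of_pos hkdvd hnpos
    have hk2 : 1 < k := by omega
    have hkm : k < n := by nlinarith
    have hmn : m < n := by nlinarith
    -- the two coprime-part subgroups are normal
    have hord1 : orderOf (h ^ m) = k := by
      rw [orderOf_pow_of_dvd (by omega) hmdvd]
    have hord2 : orderOf (h ^ k) = m := by
      rw [orderOf_pow_of_dvd (by omega) hkdvd, ← hn, ← hmk, Nat.mul_div_cancel _ hkpos]
    have hmem1 : h ^ m ∈ H := H.pow_mem hhH m
    have hmem2 : h ^ k ∈ H := H.pow_mem hhH k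
    have hN1 : (zpowers (h ^ m)).Normal := by
      refine key _ (hzfin _ hmem1) ?_
      rw [Nat.card_zpowers, hord1, hcardH]; omega
    have hN2 : (zpowers (h ^ k)).Normal := by
      refine key _ (hzfin _ hmem2) ?_
      rw [Nat.card_zpowers, hord2, hcardH]; omega
    -- Bézout
    obtain ⟨a, b, hab⟩ : ∃ a b : ℤ, a * m + b * k = 1 := by
      have := Nat.isCoprime_iff_coprime.mpr hcop
      obtain ⟨a, b, hab⟩ := this
      exact ⟨a, b, hab⟩
    -- H is normal: contradiction
    apply hHnn
    refine ⟨fun x hx g => ?_⟩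
    have hxz : x ∈ zpowers h := by rw [hgen]; exact hx
    obtain ⟨j, hj⟩ := hxz
    have hhin : g * h * g⁻¹ ∈ H := by
      have e1 : g * (h ^ m) * g⁻¹ ∈ H := zpowers_le.mpr hmem1 (hN1.conj_mem _ (mem_zpowers _) g)
      have e2 : g * (h ^ k) * g⁻¹ ∈ H := zpowers_le.mpr hmem2 (hN2.conj_mem _ (mem_zpowers _) g)
      have hsplit : g * h * g⁻¹ =
          (g * (h ^ m) * g⁻¹) ^ a * (g * (h ^ k) * g⁻¹) ^ b := by
        have : h = (h ^ m) ^ a * (h ^ k) ^ b := by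
          rw [← zpow_natCast h m, ← zpow_natCast h k, ← zpow_mul, ← zpow_mul, ← zpow_add,
            mul_comm (m : ℤ) a, mul_comm (k : ℤ) b, hab, zpow_one]
        calc g * h * g⁻¹ = g * ((h ^ m) ^ a * (h ^ k) ^ b) * g⁻¹ := by rw [← this]
          _ = (g * (h ^ m) * g⁻¹) ^ a * (g * (h ^ k) * g⁻¹) ^ b := by
              rw [conj_zpow, conj_zpow]; group
      rw [hsplit]
      exact H.mul_mem (H.zpow_mem e1 a) (H.zpow_mem e2 b)
    have : g * x * g⁻¹ = (g * h * g⁻¹) ^ j := by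
      rw [← hj, conj_zpow]
    rw [this]
    exact H.zpow_mem hhin j
  have hnm : n = m := by rw [← hmk, hk1, mul_one]
  -- H is a p-group
  have hHp : IsPGroup p H := IsPGroup.of_card (by rw [hcardH, hnm])
  -- conclude for R = sInf S
  have hRle : sInf S ≤ H := sInf_le hHS
  refine ⟨p, hp, ?_, ?_, hHp.to_le hRle⟩
  · exact hHfin.subset (fun x hx => hRle hx)
  · -- cyclic: sInf S ≤ zpowers h, which is cyclic
    haveI hcyc : IsCyclic (zpowers h : Subgroup G) := by
      refine ⟨⟨⟨h, mem_zpowers h⟩, fun x => ?_⟩⟩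
      obtain ⟨j, hj⟩ := x.2
      refine mem_zpowers_iff.mpr ⟨j, Subtype.ext ?_⟩
      simpa using hj
    have hle' : sInf S ≤ zpowers h := by rw [hgen]; exact hRle
    exact isCyclic_of_surjective _ (subgroupOfEquivOfLe hle').surjective
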